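/- arXiv:1010.2376 — 2 statements merged into one kernel-verified Lean document; each statement's English description precedes it below -/
import Mathlib

section
/- For every real number Y there exist a constant ρ > 0 and a time t₀ ≥ 2 such that for all t ≥ t₀, e^{t} ∫_{(3/(2√2))·log t − Y}^{∞} x² · e^{−2√2·x} · e^{−(√2·t − x)²/(2t)} · (1/√(2πt)) dx ≤ ρ · t^{−1/2}. In particular, the left-hand side tends to 0 as t → ∞. -/
open MeasureTheory Real Filter Topology

lemma integrableC : IntegrableOn (fun x : ℝ => x ^ 2 * Real.exp (-Real.sqrt 2 * x)) (Set.Ioi 1) := by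
  have h := integrableOn_rpow_mul_exp_neg_mul_rpow (p := 1) (s := 2) (b := Real.sqrt 2)
    (by norm_num) zero_lt_one (Real.sqrt_pos.mpr (by norm_num))
  have h' : IntegrableOn (fun x : ℝ => x ^ 2 * Real.exp (-Real.sqrt 2 * x)) (Set.Ioi 0) := by
    refine h.congr_fun (fun x hx => ?_) measurableSet_Ioi
    have hx0 : (0:ℝ) < x := hx
    beta_reduce
    rw [Real.rpow_one, show ((2:ℝ)) = ((2:ℕ):ℝ) by norm_num, Real.rpow_natCast]
  exact h'.mono_set (Set.Ioi_subset_Ioi (by norm_num))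

/-- The left-hand side of the Gaussian integral estimate (3.2)-(3.3):
`e^t ∫_{(3/(2√2))log t − Y}^{∞} x² e^{−2√2 x} e^{−(√2 t − x)²/(2t)} (1/√(2πt)) dx`. -/
noncomputable def gaussianEstimateLHS (Y t : ℝ) : ℝ :=
  Real.exp t *
    ∫ x in Set.Ioi (3 / (2 * Real.sqrt 2) * Real.log t - Y),
      x ^ 2 * Real.exp (-(2 * Real.sqrt 2) * x) *
        Real.exp (-(Real.sqrt 2 * t - x) ^ 2 / (2 * t)) * (1 / Real.sqrt (2 * Real.pi * t))

lemma lhs_nonneg (Y t : ℝ) : 0 ≤ gaussianEstimateLHS Y t := by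
  unfold gaussianEstimateLHS
  refine mul_nonneg (Real.exp_nonneg _) (integral_nonneg fun x => ?_)
  positivity

noncomputable def Cnum : ℝ := ∫ x in Set.Ioi (1:ℝ), x ^ 2 * Real.exp (-Real.sqrt 2 * x)

lemma Cnum_nonneg : 0 ≤ Cnum := integral_nonneg fun x => by positivity

lemma key (Y : ℝ) : ∀ t ≥ max 2 (Real.exp (2 * Real.sqrt 2 / 3 * (Y + 1))),
    gaussianEstimateLHS Y t ≤ (Cnum + 1) / Real.sqrt (2 * Real.pi) * t ^ (-(1:ℝ)/2) := by
  intro t ht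
  have ht2 : (2:ℝ) ≤ t := le_trans (le_max_left _ _) ht
  have ht0 : (0:ℝ) < t := by linarith
  have hs0 : (0:ℝ) < Real.sqrt 2 := Real.sqrt_pos.mpr (by norm_num)
  have hs2 : Real.sqrt 2 ^ 2 = 2 := Real.sq_sqrt (by norm_num)
  set a := 3 / (2 * Real.sqrt 2) * Real.log t - Y with ha
  -- a ≥ 1
  have hlog : 2 * Real.sqrt 2 / 3 * (Y + 1) ≤ Real.log t := by
    have := Real.log_le_log (Real.exp_pos _) (le_trans (le_max_right _ _) ht)
    rwa [Real.log_exp] at this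
  have ha1 : (1:ℝ) ≤ a := by
    have h1 : Y + 1 ≤ 3 / (2 * Real.sqrt 2) * Real.log t := by
      have h2 : 3 / (2 * Real.sqrt 2) * (2 * Real.sqrt 2 / 3 * (Y + 1)) = Y + 1 := by
        field_simp
      calc Y + 1 = 3 / (2 * Real.sqrt 2) * (2 * Real.sqrt 2 / 3 * (Y + 1)) := h2.symm
        _ ≤ 3 / (2 * Real.sqrt 2) * Real.log t := by
            apply mul_le_mul_of_nonneg_left hlog (by positivity)
    simp only [ha]; linarith
  -- pointwise bound
  have hpt : ∀ x ∈ Set.Ioi a,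
      Real.exp t * (x ^ 2 * Real.exp (-(2 * Real.sqrt 2) * x) *
        Real.exp (-(Real.sqrt 2 * t - x) ^ 2 / (2 * t)) * (1 / Real.sqrt (2 * Real.pi * t)))
      ≤ x ^ 2 * Real.exp (-Real.sqrt 2 * x) * (1 / Real.sqrt (2 * Real.pi * t)) := by
    intro x hx
    have hexp : Real.exp t * (Real.exp (-(2 * Real.sqrt 2) * x) *
        Real.exp (-(Real.sqrt 2 * t - x) ^ 2 / (2 * t))) ≤ Real.exp (-Real.sqrt 2 * x) := by
      rw [← Real.exp_add, ← Real.exp_add, Real.exp_le_exp]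
      have h2t : (0:ℝ) < 2 * t := by linarith
      have hsq : (Real.sqrt 2 * t - x) ^ 2 = 2 * t ^ 2 - 2 * Real.sqrt 2 * t * x + x ^ 2 := by
        nlinarith [hs2]
      rw [hsq]
      have heq : -(2 * t ^ 2 - 2 * Real.sqrt 2 * t * x + x ^ 2) / (2 * t)
          = -t + Real.sqrt 2 * x - x ^ 2 / (2 * t) := by
        field_simp
        ring
      rw [heq]
      have hx2 : 0 ≤ x ^ 2 / (2 * t) := div_nonneg (sq_nonneg x) h2t.le
      linarith
    calc Real.exp t * (x ^ 2 * Real.exp (-(2 * Real.sqrt 2) * x) *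
          Real.exp (-(Real.sqrt 2 * t - x) ^ 2 / (2 * t)) * (1 / Real.sqrt (2 * Real.pi * t)))
        = x ^ 2 * (Real.exp t * (Real.exp (-(2 * Real.sqrt 2) * x) *
            Real.exp (-(Real.sqrt 2 * t - x) ^ 2 / (2 * t)))) * (1 / Real.sqrt (2 * Real.pi * t)) := by
          ring
      _ ≤ x ^ 2 * Real.exp (-Real.sqrt 2 * x) * (1 / Real.sqrt (2 * Real.pi * t)) := by
          gcongr
  -- integral comparison
  have hInt1 : IntegrableOn (fun x : ℝ => x ^ 2 * Real.exp (-Real.sqrt 2 * x) * (1 / Real.sqrt (2 * Real.pi * t))) (Set.Ioi a) :=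
    (integrableC.mono_set (Set.Ioi_subset_Ioi ha1)).mul_const _
  have hmain : gaussianEstimateLHS Y t ≤
      (∫ x in Set.Ioi a, x ^ 2 * Real.exp (-Real.sqrt 2 * x) * (1 / Real.sqrt (2 * Real.pi * t))) := by
    unfold gaussianEstimateLHS
    rw [← ha, ← integral_const_mul]
    refine setIntegral_mono_on ?_ hInt1 measurableSet_Ioi hpt
    -- integrability of the LHS on Ioi a
    refine Integrable.mono' hInt1 ?_ ?_
    · exact Continuous.aestronglyMeasurable (by fun_prop)
    · filter_upwards [ae_restrict_mem measurableSet_Ioi] with x hx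
      rw [Real.norm_eq_abs, abs_of_nonneg (by positivity)]
      exact hpt x hx
  have hI2 : (∫ x in Set.Ioi a, x ^ 2 * Real.exp (-Real.sqrt 2 * x) * (1 / Real.sqrt (2 * Real.pi * t)))
      ≤ Cnum * (1 / Real.sqrt (2 * Real.pi * t)) := by
    rw [show (∫ x in Set.Ioi a, x ^ 2 * Real.exp (-Real.sqrt 2 * x) * (1 / Real.sqrt (2 * Real.pi * t)))
        = (∫ x in Set.Ioi a, x ^ 2 * Real.exp (-Real.sqrt 2 * x)) * (1 / Real.sqrt (2 * Real.pi * t)) from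
      integral_mul_const _ _]
    apply mul_le_mul_of_nonneg_right _ (by positivity)
    exact setIntegral_mono_set integrableC
      (Filter.Eventually.of_forall fun x => by positivity)
      (HasSubset.Subset.eventuallyLE (Set.Ioi_subset_Ioi ha1))
  have hfinal : Cnum * (1 / Real.sqrt (2 * Real.pi * t))
      ≤ (Cnum + 1) / Real.sqrt (2 * Real.pi) * t ^ (-(1:ℝ)/2) := by
    have hsplit : Real.sqrt (2 * Real.pi * t) = Real.sqrt (2 * Real.pi) * Real.sqrt t :=
      Real.sqrt_mul (by positivity) t
    have hrpow : t ^ (-(1:ℝ)/2) = 1 / Real.sqrt t := by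
      rw [Real.sqrt_eq_rpow, one_div, ← Real.rpow_neg ht0.le]
      norm_num
    rw [hsplit, hrpow]
    have hst : (0:ℝ) < Real.sqrt t := Real.sqrt_pos.mpr ht0
    have hsp : (0:ℝ) < Real.sqrt (2 * Real.pi) := Real.sqrt_pos.mpr (by positivity)
    have heq2 : (Cnum + 1) / Real.sqrt (2 * Real.pi) * (1 / Real.sqrt t)
        = (Cnum + 1) * (1 / (Real.sqrt (2 * Real.pi) * Real.sqrt t)) := by
      field_simp
    rw [heq2]
    exact mul_le_mul_of_nonneg_right (by linarith) (by positivity)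
  linarith

theorem stmt_0 (Y : ℝ) :
    (∃ ρ > (0 : ℝ), ∃ t₀ ≥ (2 : ℝ), ∀ t ≥ t₀,
      gaussianEstimateLHS Y t ≤ ρ * t ^ (-(1 : ℝ) / 2)) ∧
    Tendsto (fun t => gaussianEstimateLHS Y t) atTop (𝓝 0) := by
  have hρ : 0 < (Cnum + 1) / Real.sqrt (2 * Real.pi) := by
    have := Cnum_nonneg; positivity
  refine ⟨⟨(Cnum + 1) / Real.sqrt (2 * Real.pi), hρ,
    max 2 (Real.exp (2 * Real.sqrt 2 / 3 * (Y + 1))), le_max_left _ _, key Y⟩, ?_⟩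
  have hub : Tendsto (fun t : ℝ => (Cnum + 1) / Real.sqrt (2 * Real.pi) * t ^ (-(1:ℝ)/2)) atTop (𝓝 0) := by
    have := (tendsto_rpow_neg_atTop (y := (1:ℝ)/2) (by norm_num)).const_mul
      ((Cnum + 1) / Real.sqrt (2 * Real.pi))
    simpa [neg_div] using this
  refine squeeze_zero' (Filter.Eventually.of_forall fun t => lhs_nonneg Y t) ?_ hub
  filter_upwards [eventually_ge_atTop (max 2 (Real.exp (2 * Real.sqrt 2 / 3 * (Y + 1))))] with t ht
  exact key Y t ht
end

section
/- For every y ∈ ℝ, lim_{r → ∞} (1/r^{3/2}) ∫_{y + (3/(2√2))·log r}^{∞} X · exp((3/(2√2))·X·(log r)/r − X²/(2r)) dX = 0. -/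
open MeasureTheory Real Filter Topology

lemma aux_integral {b : ℝ} (hb : 0 < b) :
    ∫ x in Set.Ioi (0 : ℝ), x * Real.exp (-b * x ^ 2) = (2 * b)⁻¹ := by
  have hd : ∀ x ∈ Set.Ici (0 : ℝ),
      HasDerivAt (fun x : ℝ => -(2 * b)⁻¹ * Real.exp (-b * x ^ 2))
        (x * Real.exp (-b * x ^ 2)) x := by
    intro x _
    have h1 : HasDerivAt (fun x : ℝ => -b * x ^ 2) (-b * (2 * x)) x := by
      simpa using (hasDerivAt_pow 2 x).const_mul (-b)
    have h2 := (h1.exp).const_mul (-(2 * b)⁻¹)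
    refine h2.congr_deriv ?_
    field_simp
  have hlim : Tendsto (fun x : ℝ => -(2 * b)⁻¹ * Real.exp (-b * x ^ 2)) atTop (𝓝 0) := by
    have : Tendsto (fun x : ℝ => -b * x ^ 2) atTop atBot := by
      apply Tendsto.const_mul_atTop_of_neg (by linarith : -b < 0)
      exact tendsto_pow_atTop (by norm_num)
    have := (Real.tendsto_exp_atBot.comp this).const_mul (-(2 * b)⁻¹)
    simpa using this
  have := integral_Ioi_of_hasDerivAt_of_tendsto' hd
    ((integrable_mul_exp_neg_mul_sq hb).integrableOn) hlim
  simp only [this]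
  norm_num

theorem stmt_6 (y : ℝ) :
    Tendsto
      (fun r : ℝ =>
        (1 / r ^ ((3 : ℝ) / 2)) *
          ∫ X in Set.Ioi (y + 3 / (2 * Real.sqrt 2) * Real.log r),
            X * Real.exp (3 / (2 * Real.sqrt 2) * X * Real.log r / r - X ^ 2 / (2 * r)))
      atTop (𝓝 0) := by
  set c : ℝ := 3 / (2 * Real.sqrt 2) with hc
  have hc0 : 0 < c := by
    apply div_pos (by norm_num)
    positivity
  -- eventual hypotheses
  have hev : ∀ᶠ r : ℝ in atTop,
      1 ≤ r ∧ 0 < y + c * Real.log r ∧ c ^ 2 * (Real.log r) ^ 2 / r ≤ 1 := by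
    have h1 : ∀ᶠ r : ℝ in atTop, (1 : ℝ) ≤ r := eventually_ge_atTop 1
    have h2 : ∀ᶠ r : ℝ in atTop, 0 < y + c * Real.log r := by
      have : Tendsto (fun r : ℝ => y + c * Real.log r) atTop atTop := by
        apply tendsto_atTop_add_const_left
        exact (Real.tendsto_log_atTop.const_mul_atTop hc0)
      exact this.eventually_gt_atTop 0
    have h3 : ∀ᶠ r : ℝ in atTop, c ^ 2 * (Real.log r) ^ 2 / r ≤ 1 := by
      have hl : Tendsto (fun r : ℝ => Real.log r ^ 2 / (1 * r + 0)) atTop (𝓝 0) :=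
        Real.tendsto_pow_log_div_mul_add_atTop 1 0 2 one_ne_zero
      have hl' : Tendsto (fun r : ℝ => c ^ 2 * (Real.log r ^ 2 / (1 * r + 0))) atTop (𝓝 0) := by
        simpa using hl.const_mul (c ^ 2)
      have := hl'.eventually (eventually_le_nhds (by norm_num : (0:ℝ) < 1))
      filter_upwards [this] with r hr
      calc c ^ 2 * Real.log r ^ 2 / r = c ^ 2 * (Real.log r ^ 2 / (1 * r + 0)) := by
            ring_nf
        _ ≤ 1 := hr
    filter_upwards [h1, h2, h3] with r hr1 hr2 hr3
    exact ⟨hr1, hr2, hr3⟩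
  -- upper bound function
  have hupper : Tendsto (fun r : ℝ => (2 * Real.exp 1) * r ^ (-(1:ℝ)/2)) atTop (𝓝 0) := by
    have := (tendsto_rpow_neg_atTop (by norm_num : (0:ℝ) < 1/2)).const_mul (2 * Real.exp 1)
    simpa [neg_div, mul_zero] using this
  refine tendsto_of_tendsto_of_tendsto_of_le_of_le' tendsto_const_nhds hupper ?_ ?_
  · -- lower bound: 0 ≤ f r eventually
    filter_upwards [hev] with r ⟨hr1, hr2, _⟩
    have hr0 : (0:ℝ) < r := lt_of_lt_of_le one_pos hr1
    apply mul_nonneg (by positivity)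
    apply setIntegral_nonneg measurableSet_Ioi
    intro X hX
    have hX0 : 0 < X := lt_trans hr2 hX
    positivity
  · -- upper bound
    filter_upwards [hev] with r ⟨hr1, hr2, hr3⟩
    have hr0 : (0:ℝ) < r := lt_of_lt_of_le one_pos hr1
    set L := Real.log r with hL
    set a := y + c * L with ha
    set b : ℝ := 1 / (4 * r) with hb
    have hb0 : 0 < b := by positivity
    -- pointwise bound on the integrand over Ioi a
    have hpt : ∀ X ∈ Set.Ioi a,
        X * Real.exp (c * X * L / r - X ^ 2 / (2 * r))
          ≤ Real.exp 1 * (X * Real.exp (-b * X ^ 2)) := by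
      intro X hX
      have hX0 : 0 < X := lt_trans hr2 hX
      have hexp : c * X * L / r - X ^ 2 / (2 * r) ≤ 1 + -b * X ^ 2 := by
        have hnum : 4 * (c * X * L) - X ^ 2 - 4 * r ≤ 0 := by
          have h4 : c ^ 2 * L ^ 2 ≤ r := by
            rwa [div_le_one hr0] at hr3
          nlinarith [sq_nonneg (X - 2 * c * L)]
        have heq : c * X * L / r - X ^ 2 / (2 * r) - (1 + -b * X ^ 2)
            = (4 * (c * X * L) - X ^ 2 - 4 * r) / (4 * r) := by
          rw [hb]; field_simp; ring
        have := div_nonpos_of_nonpos_of_nonneg hnum (by positivity : (0:ℝ) ≤ 4 * r)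
        linarith [heq ▸ this]
      calc X * Real.exp (c * X * L / r - X ^ 2 / (2 * r))
          ≤ X * Real.exp (1 + -b * X ^ 2) :=
            mul_le_mul_of_nonneg_left (Real.exp_le_exp.mpr hexp) hX0.le
        _ = Real.exp 1 * (X * Real.exp (-b * X ^ 2)) := by
            rw [Real.exp_add]; ring
    -- integrability of the dominating function
    have hgint : IntegrableOn (fun X : ℝ => Real.exp 1 * (X * Real.exp (-b * X ^ 2)))
        (Set.Ioi a) := ((integrable_mul_exp_neg_mul_sq hb0).const_mul _).integrableOn
    -- integrability of the integrand
    have hfint : IntegrableOn (fun X : ℝ => X * Real.exp (c * X * L / r - X ^ 2 / (2 * r)))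
        (Set.Ioi a) := by
      apply Integrable.mono' hgint
      · apply Continuous.aestronglyMeasurable
        continuity
      · rw [ae_restrict_iff' measurableSet_Ioi]
        filter_upwards with X hX
        have hX0 : 0 < X := lt_trans hr2 hX
        rw [Real.norm_eq_abs, abs_of_nonneg (by positivity)]
        exact hpt X hX
    have hmono : (∫ X in Set.Ioi a, X * Real.exp (c * X * L / r - X ^ 2 / (2 * r)))
        ≤ ∫ X in Set.Ioi a, Real.exp 1 * (X * Real.exp (-b * X ^ 2)) :=
      setIntegral_mono_on hfint hgint measurableSet_Ioi hpt
    have hmono2 : (∫ X in Set.Ioi a, Real.exp 1 * (X * Real.exp (-b * X ^ 2)))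
        ≤ ∫ X in Set.Ioi (0:ℝ), Real.exp 1 * (X * Real.exp (-b * X ^ 2)) := by
      apply setIntegral_mono_set
        ((integrable_mul_exp_neg_mul_sq hb0).const_mul _).integrableOn
      · filter_upwards [ae_restrict_mem measurableSet_Ioi] with X hX
        have hX0 : 0 < X := hX
        positivity
      · exact HasSubset.Subset.eventuallyLE (Set.Ioi_subset_Ioi hr2.le)
    have hval : (∫ X in Set.Ioi (0:ℝ), Real.exp 1 * (X * Real.exp (-b * X ^ 2)))
        = Real.exp 1 * (2 * b)⁻¹ := by
      rw [integral_const_mul, aux_integral hb0]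
    have hint_le : (∫ X in Set.Ioi a, X * Real.exp (c * X * L / r - X ^ 2 / (2 * r)))
        ≤ Real.exp 1 * (2 * r) := by
      have : (2 * b)⁻¹ = 2 * r := by rw [hb]; field_simp; ring
      calc _ ≤ _ := hmono
        _ ≤ _ := hmono2
        _ = Real.exp 1 * (2 * b)⁻¹ := hval
        _ = Real.exp 1 * (2 * r) := by rw [this]
    -- combine
    have hpow : (0:ℝ) < r ^ ((3:ℝ)/2) := Real.rpow_pos_of_pos hr0 _
    calc (1 / r ^ ((3:ℝ)/2)) *
          ∫ X in Set.Ioi a, X * Real.exp (c * X * L / r - X ^ 2 / (2 * r))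
        ≤ (1 / r ^ ((3:ℝ)/2)) * (Real.exp 1 * (2 * r)) := by
          apply mul_le_mul_of_nonneg_left hint_le (by positivity)
      _ = (2 * Real.exp 1) * r ^ (-(1:ℝ)/2) := by
          have h : r ^ ((-1:ℝ)/2) * r ^ ((3:ℝ)/2) = r := by
            rw [← Real.rpow_add hr0]; norm_num
          rw [div_mul_eq_mul_div, div_eq_iff hpow.ne']
          rw [show (-(1:ℝ)/2) = ((-1:ℝ)/2) by norm_num]
          linear_combination (-2 * Real.exp 1) * h
end
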